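/- arXiv:2103.01565 — 2 statements merged into one kernel-verified Lean document; each statement's English description precedes it below -/
import Mathlib

section
/- Let p be a prime, n ≥ 1 and δ ≥ 0 integers, and let Ω = (ℤ/pⁿℤ)^δ. Let X be a free ℤ-module of rank ρ ≥ 0 and let f : X → Ω be a group homomorphism such that the composite map X → Ω/pΩ has image of 𝔽_p-dimension equal to min(ρ, δ). Then the image f(X) has order p^{min(ρ,δ)·n}. -/
/-- Let `p` be a prime, `n ≥ 1`, `δ ≥ 0`, and `Ω = (ℤ/pⁿℤ)^δ`.
Let `X` be a free `ℤ`-module of rank `ρ` and `f : X → Ω` a group homomorphism such that the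
composite `X → Ω/pΩ` (reduction mod `p` in each coordinate) has image of `𝔽_p`-dimension
`min ρ δ`.  Then `#f(X) = p ^ (min ρ δ * n)`. -/
theorem stmt_0 (p : ℕ) (hp : p.Prime) (n δ ρ : ℕ) (hn : 1 ≤ n)
    (X : Type*) [AddCommGroup X] [Module ℤ X] [Module.Free ℤ X] [Module.Finite ℤ X]
    (hX : Module.finrank ℤ X = ρ)
    (f : X →+ (Fin δ → ZMod (p ^ n)))
    (hdim : Module.finrank (ZMod p)
      (Submodule.span (ZMod p)
        (Set.range (fun x : X =>
          (fun i => ZMod.castHom (dvd_pow_self p (Nat.one_le_iff_ne_zero.mp hn)) (ZMod p)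
            (f x i) : Fin δ → ZMod p)))) = min ρ δ) :
    Nat.card (Set.range f) = p ^ (min ρ δ * n) := by
  classical
  haveI : Fact p.Prime := ⟨hp⟩
  haveI : NeZero p := ⟨hp.ne_zero⟩
  haveI : NeZero (p ^ n) := ⟨pow_ne_zero _ hp.ne_zero⟩
  set d := min ρ δ with hd
  set g : X → (Fin δ → ZMod p) := fun x i =>
    ZMod.castHom (dvd_pow_self p (Nat.one_le_iff_ne_zero.mp hn)) (ZMod p) (f x i) with hgdef
  have hdim' : Module.finrank (ZMod p) (Submodule.span (ZMod p) (Set.range g)) = d := hdim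
  -- Step 1: find d elements of X with linearly independent reductions
  obtain ⟨t, hts, htspan, htli⟩ := exists_linearIndependent (ZMod p) (Set.range g)
  have htfin : t.Finite := Set.toFinite t
  haveI := htfin.fintype
  have hcard : Fintype.card t = d := by
    have h1 := finrank_span_set_eq_card htli
    rw [htspan, hdim'] at h1
    rw [← Set.toFinset_card, ← h1]
  let e : Fin d ≃ t := (Fintype.equivFinOfCardEq hcard).symm
  have hv : LinearIndependent (ZMod p) (fun i : Fin d => (e i : Fin δ → ZMod p)) :=
    htli.comp e e.injective
  have hxe : ∀ i : Fin d, ∃ x : X, g x = (e i : Fin δ → ZMod p) := fun i => hts (e i).2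
  choose x hx using hxe
  -- Step 2: key injectivity claim
  have key : ∀ c : Fin d → ZMod (p ^ n), (∑ i, c i • f (x i)) = 0 → c = 0 := by
    intro c hc
    have hcj : ∀ j, ∑ i, c i * f (x i) j = 0 := by
      intro j
      have := congrFun hc j
      simpa [Finset.sum_apply] using this
    have main : ∀ m, m ≤ n → ∀ i, p ^ m ∣ (c i).val := by
      intro m
      induction m with
      | zero => intro _ i; simp
      | succ m ih =>
        intro hm i
        have ih' := ih (Nat.le_of_succ_le hm)
        set a : Fin d → ℕ := fun i => (c i).val / p ^ m with ha
        have haeq : ∀ i, (c i).val = p ^ m * a i := fun i =>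
          (Nat.mul_div_cancel' (ih' i)).symm
        set S : Fin δ → ZMod (p ^ n) := fun j => ∑ i, (a i : ZMod (p ^ n)) * f (x i) j with hS
        have hpS : ∀ j, (p : ZMod (p ^ n)) ^ m * S j = 0 := by
          intro j
          rw [hS, Finset.mul_sum]
          have : ∀ i ∈ Finset.univ, (p : ZMod (p ^ n)) ^ m * ((a i : ZMod (p ^ n)) * f (x i) j)
              = c i * f (x i) j := by
            intro i _
            rw [← mul_assoc]
            congr 1
            rw [← Nat.cast_pow, ← Nat.cast_mul, ← haeq i, ZMod.natCast_val, ZMod.cast_id]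
          rw [Finset.sum_congr rfl this]
          exact hcj j
        have hdvdS : ∀ j, p ∣ (S j).val := by
          intro j
          have h0 : ((p ^ m * (S j).val : ℕ) : ZMod (p ^ n)) = 0 := by
            push_cast
            rw [ZMod.natCast_val, ZMod.cast_id]
            exact hpS j
          rw [ZMod.natCast_eq_zero_iff] at h0
          have h0' : p ^ m * p ^ (n - m) ∣ p ^ m * (S j).val := by
            rw [← pow_add, show m + (n - m) = n by omega]
            exact h0
          have h1 : p ^ (n - m) ∣ (S j).val :=
            (mul_dvd_mul_iff_left (pow_ne_zero m hp.ne_zero)).mp h0'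
          exact dvd_trans (dvd_pow_self p (by omega)) h1
        have hcast : ∀ j, ∑ i, (a i : ZMod p) * g (x i) j = 0 := by
          intro j
          have := map_sum (ZMod.castHom (dvd_pow_self p (Nat.one_le_iff_ne_zero.mp hn)) (ZMod p))
            (fun i => (a i : ZMod (p ^ n)) * f (x i) j) Finset.univ
          have hSj : (ZMod.castHom (dvd_pow_self p (Nat.one_le_iff_ne_zero.mp hn)) (ZMod p)) (S j)
              = 0 := by
            rw [ZMod.castHom_apply, ← ZMod.natCast_val, ZMod.natCast_eq_zero_iff]
            exact hdvdS j
          rw [hS] at hSj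
          rw [this] at hSj
          rw [← hSj]
          refine Finset.sum_congr rfl fun i _ => ?_
          simp only [map_mul, map_natCast]
          rfl
        have hc2 : ∀ j, ∑ i, (a i : ZMod p) * (e i : Fin δ → ZMod p) j = 0 := by
          intro j
          calc ∑ i, (a i : ZMod p) * (e i : Fin δ → ZMod p) j
              = ∑ i, (a i : ZMod p) * g (x i) j :=
                Finset.sum_congr rfl fun i _ => by rw [hx i]
            _ = 0 := hcast j
        have hzero : ∀ i, (a i : ZMod p) = 0 := by
          have hsum : ∑ i, (a i : ZMod p) • (fun i : Fin d => (e i : Fin δ → ZMod p)) i = 0 := by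
            funext j
            simp only [Finset.sum_apply, Pi.smul_apply, smul_eq_mul, Pi.zero_apply]
            exact hc2 j
          exact Fintype.linearIndependent_iff.mp hv _ hsum
        have hpa : p ∣ a i := by
          have := hzero i
          rwa [ZMod.natCast_eq_zero_iff] at this
        rw [haeq i, pow_succ]
        exact mul_dvd_mul_left _ hpa
    funext i
    have hdvd := main n le_rfl i
    have hlt := ZMod.val_lt (c i)
    exact (ZMod.val_eq_zero _).mp (Nat.eq_zero_of_dvd_of_lt hdvd hlt)
  -- Step 3: lower bound
  set φ : (Fin d → ZMod (p ^ n)) → (Fin δ → ZMod (p ^ n)) := fun c => ∑ i, c i • f (x i) with hφ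
  have hφinj : Function.Injective φ := by
    intro c c' h
    have hsub : ∑ i, (c - c') i • f (x i) = 0 := by
      simp only [Pi.sub_apply, sub_smul, Finset.sum_sub_distrib]
      rw [show (∑ i, c i • f (x i)) = ∑ i, c' i • f (x i) from h, sub_self]
    have := key _ hsub
    exact sub_eq_zero.mp this
  have hφrange : Set.range φ ⊆ Set.range f := by
    rintro _ ⟨c, rfl⟩
    refine ⟨∑ i, ((c i).val : ℤ) • x i, ?_⟩
    rw [map_sum]
    refine Finset.sum_congr rfl fun i _ => ?_
    calc f (((c i).val : ℤ) • x i)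
        = ((c i).val : ℤ) • f (x i) := map_zsmul f _ _
      _ = (((c i).val : ℤ) : ZMod (p ^ n)) • f (x i) := (Int.cast_smul_eq_zsmul _ _ _).symm
      _ = c i • f (x i) := by
          congr 1
          push_cast
          rw [ZMod.natCast_val, ZMod.cast_id]
  have hlow : p ^ (d * n) ≤ Nat.card (Set.range f) := by
    have h1 : Nat.card (Set.range φ) = p ^ (d * n) := by
      rw [Nat.card_range_of_injective hφinj, Nat.card_eq_fintype_card, Fintype.card_fun,
        Fintype.card_fin, ZMod.card, ← pow_mul, mul_comm n d]
    rw [← h1]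
    exact Nat.card_mono (Set.toFinite _) hφrange
  -- Step 4: upper bounds
  let B : Module.Basis (Fin ρ) ℤ X := Module.finBasisOfFinrankEq ℤ X hX
  set ψ : (Fin ρ → ZMod (p ^ n)) → (Fin δ → ZMod (p ^ n)) := fun c => ∑ i, c i • f (B i) with hψ
  have hfr : Set.range f ⊆ Set.range ψ := by
    rintro _ ⟨y, rfl⟩
    refine ⟨fun i => ((B.repr y i : ℤ) : ZMod (p ^ n)), ?_⟩
    show ∑ i, ((B.repr y i : ℤ) : ZMod (p ^ n)) • f (B i) = f y
    conv_rhs => rw [← B.sum_repr y]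
    rw [map_sum]
    refine Finset.sum_congr rfl fun i _ => ?_
    exact (map_intCast_smul f ℤ (ZMod (p ^ n)) _ _).symm
  have hupρ : Nat.card (Set.range f) ≤ p ^ (ρ * n) := by
    have h2 : Nat.card (Set.range ψ) ≤ p ^ (ρ * n) := by
      have h3 := Nat.card_le_card_of_surjective (Set.rangeFactorization ψ)
        Set.rangeFactorization_surjective
      rwa [Nat.card_eq_fintype_card (α := Fin ρ → ZMod (p ^ n)), Fintype.card_fun,
        Fintype.card_fin, ZMod.card, ← pow_mul, mul_comm n ρ] at h3
    exact le_trans (Nat.card_mono (Set.toFinite _) hfr) h2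
  have hupδ : Nat.card (Set.range f) ≤ p ^ (δ * n) := by
    have h4 : Nat.card (Set.range f) ≤ Nat.card (Fin δ → ZMod (p ^ n)) :=
      Nat.card_le_card_of_injective Subtype.val Subtype.val_injective
    rwa [Nat.card_eq_fintype_card (α := Fin δ → ZMod (p ^ n)), Fintype.card_fun,
      Fintype.card_fin, ZMod.card, ← pow_mul, mul_comm n δ] at h4
  refine le_antisymm ?_ hlow
  rcases le_total ρ δ with h | h
  · rw [hd, min_eq_left h]; exact hupρ
  · rw [hd, min_eq_right h]; exact hupδ
end

section
/- Let p be a prime and M a finite abelian p-group equipped with an automorphism σ of p-power order. If the fixed-point subgroups of σ and of σ^p coincide (M^σ = M^{σ^p}), then σ is the identity on M. -/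
private lemma aux_pow_fix {M : Type*} [Group M] (σ : M ≃* M) (c : M) (hc : σ c = c) :
    ∀ n : ℕ, (σ ^ n) c = c := by
  intro n
  induction n with
  | zero => simp
  | succ n ih => rw [pow_succ, MulAut.mul_apply, hc, ih]

private lemma aux_pow_formula {M : Type*} [CommGroup M] (σ : M ≃* M) (a c : M)
    (ha : σ a = a * c) (hc : σ c = c) : ∀ n : ℕ, (σ ^ n) a = a * c ^ n := by
  intro n
  induction n with
  | zero => simp
  | succ n ih =>
      rw [pow_succ, MulAut.mul_apply, ha, map_mul,
        aux_pow_fix σ c hc, ih, pow_succ, mul_assoc]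

/-- A `p`-power-order automorphism of a finite `p`-group with no nontrivial fixed point
forces the group to be trivial. -/
private lemma aux_trivial (p : ℕ) (hp : p.Prime) (N : Type*) [Group N] [Finite N]
    (hN : IsPGroup p N) (τ : N ≃* N) (hτ : ∃ j : ℕ, τ ^ (p ^ j) = 1)
    (h1 : ∀ y : N, τ y = y → y = 1) : ∀ y : N, y = 1 := by
  haveI : Fact p.Prime := ⟨hp⟩
  by_contra h
  push_neg at h
  obtain ⟨y₀, hy₀⟩ := h
  haveI : Nontrivial N := ⟨y₀, 1, hy₀⟩
  -- the cyclic group generated by τ is a p-group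
  set G : Subgroup (MulAut N) := Subgroup.zpowers (τ : MulAut N) with hG
  obtain ⟨j, hj⟩ := hτ
  have hGp : IsPGroup p G := by
    rintro ⟨g, hg⟩
    obtain ⟨n, rfl⟩ := Subgroup.mem_zpowers_iff.mp hg
    refine ⟨j, ?_⟩
    have : ((τ : MulAut N) ^ (n : ℤ)) ^ (p ^ j : ℕ) = 1 := by
      rw [← zpow_natCast, ← zpow_mul, mul_comm, zpow_mul, zpow_natCast, hj, one_zpow]
    exact Subtype.ext (by simpa using this)
  -- p divides card N
  have hdvd : p ∣ Nat.card N := by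
    obtain ⟨n, hn⟩ := (IsPGroup.iff_card).mp hN
    rcases n with _ | n
    · simp at hn
      exact absurd hn (Finite.one_lt_card.ne')
    · exact hn ▸ dvd_pow_self p (Nat.succ_ne_zero n)
  -- 1 is a fixed point of the action of G on N
  have h1fix : (1 : N) ∈ MulAction.fixedPoints G N := by
    intro g
    simp [MulAut.smul_def]
  obtain ⟨b, hb, hb1⟩ := hGp.exists_fixed_point_of_prime_dvd_card_of_fixed_point N hdvd h1fix
  have hτb : τ b = b := by
    have := hb ⟨(τ : MulAut N), Subgroup.mem_zpowers _⟩
    simpa [MulAut.smul_def] using this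
  exact hb1 (h1 b hτb).symm

/-- Let `p` be a prime and `M` a finite abelian `p`-group with an
automorphism `σ` of `p`-power order.  If the fixed points of `σ` and of `σ ^ p` coincide,
then `σ` is the identity on `M`. -/
theorem stmt_12 (p : ℕ) (hp : p.Prime)
    (M : Type*) [CommGroup M] [Finite M] (hM : IsPGroup p M)
    (σ : M ≃* M) (hord : ∃ j : ℕ, σ ^ (p ^ j) = 1)
    (hfix : ∀ x : M, σ x = x ↔ (σ ^ p) x = x) :
    ∀ x : M, σ x = x := by
  -- the "twisting" homomorphism x ↦ σ x * x⁻¹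
  set φ : M →* M := MonoidHom.mk' (fun x => σ x * x⁻¹)
    (fun a b => by
      show σ (a * b) * (a * b)⁻¹ = (σ a * a⁻¹) * (σ b * b⁻¹)
      rw [map_mul, mul_inv, mul_mul_mul_comm]) with hφ
  have hφdef : ∀ x : M, φ x = σ x * x⁻¹ := fun x => rfl
  set T : Subgroup M := φ.range with hT
  -- σ has no nontrivial fixed point in T
  have hT1 : ∀ c ∈ T, σ c = c → c = 1 := by
    rintro c ⟨x, rfl⟩ hc
    by_contra hne
    rw [hφdef] at hc hne
    have hx : σ x = x * (σ x * x⁻¹) := by rw [mul_comm (σ x) x⁻¹, mul_inv_cancel_left]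
    -- minimal k with c ^ p ^ k = 1
    have hex : ∃ k : ℕ, (σ x * x⁻¹) ^ p ^ k = 1 := hM (σ x * x⁻¹)
    classical
    set k₀ := Nat.find hex with hk₀
    have hk₀spec : (σ x * x⁻¹) ^ p ^ k₀ = 1 := Nat.find_spec hex
    have hk₀pos : 0 < k₀ := by
      rcases Nat.eq_zero_or_pos k₀ with h | h
      · exfalso; apply hne; simpa [h] using hk₀spec
      · exact h
    set d := (σ x * x⁻¹) ^ p ^ (k₀ - 1) with hd
    have hdne : d ≠ 1 := Nat.find_min hex (by omega)
    have hdp : d ^ p = 1 := by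
      rw [hd, ← pow_mul, ← pow_succ]
      have h' : k₀ - 1 + 1 = k₀ := by omega
      rw [h', hk₀spec]
    have hdfix : σ d = d := by rw [hd, map_pow, hc]
    set y := x ^ p ^ (k₀ - 1) with hy
    have hyd : σ y = y * d := by
      rw [hy, hd, map_pow, ← mul_pow, ← hx]
    have hyp : (σ ^ p) y = y := by
      rw [aux_pow_formula σ y d hyd hdfix p, hdp, mul_one]
    have hyy := (hfix y).mpr hyp
    rw [hyd, mul_eq_left] at hyy
    exact hdne hyy
  -- T is invariant under σ and σ⁻¹
  have hmem : ∀ c ∈ T, σ c ∈ T := by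
    rintro c ⟨x, rfl⟩
    exact ⟨σ x, by rw [hφdef, hφdef, map_mul, map_inv]⟩
  have hmem' : ∀ c ∈ T, σ⁻¹ c ∈ T := by
    rintro c ⟨x, rfl⟩
    refine ⟨σ⁻¹ x, ?_⟩
    rw [hφdef, hφdef, map_mul, map_inv]
    simp
  -- the induced automorphism of T
  set τ : T ≃* T :=
    { toFun := fun c => ⟨σ c, hmem c c.2⟩
      invFun := fun c => ⟨σ⁻¹ c, hmem' c c.2⟩
      left_inv := fun c => by ext; simp
      right_inv := fun c => by ext; simp
      map_mul' := fun a b => by ext; simp } with hτdef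
  have hτ_apply : ∀ (c : T), (τ c : M) = σ (c : M) := fun c => rfl
  have hτ_pow : ∀ (n : ℕ) (c : T), ((τ ^ n) c : M) = (σ ^ n) (c : M) := by
    intro n
    induction n with
    | zero => intro c; simp
    | succ n ih =>
        intro c
        rw [pow_succ, pow_succ, MulAut.mul_apply, MulAut.mul_apply, ← hτ_apply, ih]
  -- τ has p-power order
  obtain ⟨j, hj⟩ := hord
  have hτord : τ ^ (p ^ j) = 1 := by
    ext c
    rw [hτ_pow, hj]
    rfl
  -- conclude
  have htriv : ∀ y : T, y = 1 :=
    aux_trivial p hp T (hM.to_subgroup T) τ ⟨j, hτord⟩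
      (fun y hy => by
        ext
        exact hT1 y y.2 (by rw [← hτ_apply]; exact congrArg Subtype.val hy))
  intro x
  have : φ x = 1 := by
    have := htriv ⟨φ x, ⟨x, rfl⟩⟩
    exact congrArg Subtype.val this
  rw [hφdef, mul_inv_eq_one] at this
  exact this
end
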